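/- Let ω be a walk on ℤ² and a, b boundary edges with associated oriented edges e_a, e_b. If ω is a walk from a_+ to b_+, then the loop-erasure satisfies LE[e_a ⊕ ω ⊕ e_b^R] = e_a ⊕ LE[ω] ⊕ e_b^R, where ⊕ denotes concatenation and e^R denotes edge reversal, provided a_−, b_− lie outside the set visited by ω. -/

import Mathlib

/-- One step of chronological loop erasure: given the path built so far, append
the next vertex, erasing the loop it closes if it has been visited before. -/
def loopEraseStep {α : Type*} [DecidableEq α] (path : List α) (v : α) : List α :=
  if v ∈ path then path.takeWhile (· ≠ v) ++ [v] else path ++ [v]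

/-- Chronological loop erasure of a walk: erase loops in the order they form. -/
def loopErase {α : Type*} [DecidableEq α] (ω : List α) : List α :=
  ω.foldl loopEraseStep []

/-- Nearest-neighbor adjacency on `ℤ²`. -/
def ZZAdj (p q : ℤ × ℤ) : Prop := |p.1 - q.1| + |p.2 - q.2| = 1

lemma foldl_cons_of_not_mem {α : Type*} [DecidableEq α] (ω : List α) :
    ∀ (p : List α) (a : α), a ∉ ω →
      List.foldl loopEraseStep (a :: p) ω = a :: List.foldl loopEraseStep p ω := by
  induction ω with
  | nil => intro p a _; rfl
  | cons v t ih =>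
    intro p a ha
    have hav : a ≠ v := fun h => ha (h ▸ List.mem_cons_self)
    have hstep : loopEraseStep (a :: p) v = a :: loopEraseStep p v := by
      unfold loopEraseStep
      have hmem : (v ∈ a :: p) ↔ (v ∈ p) := by
        constructor
        · intro h; rcases List.mem_cons.mp h with h | h
          · exact absurd h.symm hav
          · exact h
        · exact List.mem_cons_of_mem _
      by_cases h : v ∈ p
      · rw [if_pos (hmem.mpr h), if_pos h]
        rw [List.takeWhile_cons_of_pos (by simp [hav])]
        simp
      · rw [if_neg (fun hh => h (hmem.mp hh)), if_neg h]
        simp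
    simp only [List.foldl_cons, hstep]
    exact ih _ a (fun h => ha (List.mem_cons_of_mem _ h))

lemma mem_foldl_loopErase {α : Type*} [DecidableEq α] (ω : List α) :
    ∀ (p : List α) (x : α), x ∈ List.foldl loopEraseStep p ω → x ∈ p ∨ x ∈ ω := by
  induction ω with
  | nil => intro p x h; exact Or.inl h
  | cons v t ih =>
    intro p x h
    rcases ih _ x h with h' | h'
    · unfold loopEraseStep at h'
      by_cases hv : v ∈ p
      · rw [if_pos hv] at h'
        rcases List.mem_append.mp h' with h'' | h''
        · exact Or.inl ((List.takeWhile_prefix _).sublist.subset h'')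
        · simp at h''; subst h''; exact Or.inl hv
      · rw [if_neg hv] at h'
        rcases List.mem_append.mp h' with h'' | h''
        · exact Or.inl h''
        · simp at h''; subst h''; right; exact List.mem_cons_self
    · right; exact List.mem_cons_of_mem _ h'

/-- Loop erasure commutes with prepending the edge `e_a = [a₋, a₊]` and
appending the reversed edge `e_b^R = [b₊, b₋]`: if `ω` is a nearest-neighbor
walk on `ℤ²` from `a₊` to `b₊` and the outer endpoints `a₋, b₋` are not visited
by `ω` (and `a₋ ≠ b₋`), then
`LE[e_a ⊕ ω ⊕ e_b^R] = e_a ⊕ LE[ω] ⊕ e_b^R`. -/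
theorem stmt_19 (ω : List (ℤ × ℤ)) (am ap bm bp : ℤ × ℤ)
    (hne : ω ≠ [])
    (hhead : ω.head? = some ap) (hlast : ω.getLast? = some bp)
    (hwalk : List.Chain' ZZAdj (am :: (ω ++ [bm])))
    (ham : am ∉ ω) (hbm : bm ∉ ω) (hab : am ≠ bm) :
    loopErase (am :: (ω ++ [bm])) = am :: (loopErase ω ++ [bm]) := by
  unfold loopErase
  rw [List.foldl_cons]
  have h1 : loopEraseStep ([] : List (ℤ × ℤ)) am = [am] := rfl
  rw [h1]
  have ham' : am ∉ ω ++ [bm] := by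
    intro h; rcases List.mem_append.mp h with h | h
    · exact ham h
    · simp at h; exact hab h
  rw [List.foldl_append, foldl_cons_of_not_mem _ _ _ ham]
  have hbm' : bm ∉ am :: List.foldl loopEraseStep [] ω := by
    intro h
    rcases List.mem_cons.mp h with h | h
    · exact hab h.symm
    · rcases mem_foldl_loopErase _ _ _ h with h' | h'
      · simp at h'
      · exact hbm h'
  simp only [List.foldl_cons, List.foldl_nil]
  set L := List.foldl loopEraseStep [] ω with hL
  show loopEraseStep (am :: L) bm = am :: (L ++ [bm])
  rw [loopEraseStep, if_neg hbm']
  rfl
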